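/- In a double-array, the CHECK condition is forced by injectivity: if for all states s and labels c with δ(s,c)=t we have BASE[s]+c = t and CHECK[t]=s, and distinct transitions lead to distinct states (the transition relation forms a trie, i.e., each non-root state has a unique incoming transition), then for any state s and label c with δ(s,c)=⊥, either BASE[s]+c is a vacant id or CHECK[BASE[s]+c] ≠ s. -/

import Mathlib

/-- The CHECK condition is forced by injectivity: if the
transition relation forms a trie (each non-root used state has exactly one
incoming transition), the double-array equations hold for all transitions, and
`CHECK` at the root is invalid (not equal to any state id), then for any state
`s` and label `c` with `δ(s,c) = ⊥`, either `BASE[s]+c` is a vacant id (not a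
used state id) or `CHECK[BASE[s]+c] ≠ s`. -/
theorem stmt11 (Used : Set ℕ) (root : ℕ) (hroot : root ∈ Used)
    (δ : ℕ → ℕ → Option ℕ) (BASE CHECK : ℕ → ℕ)
    (htrie : ∀ t ∈ Used, t ≠ root → ∃! p : ℕ × ℕ, p.1 ∈ Used ∧ δ p.1 p.2 = some t)
    (hDA : ∀ s ∈ Used, ∀ c t, δ s c = some t → BASE s + c = t ∧ CHECK t = s)
    (hcr : ∀ s ∈ Used, CHECK root ≠ s) :
    ∀ s ∈ Used, ∀ c, δ s c = none →
      BASE s + c ∉ Used ∨ CHECK (BASE s + c) ≠ s := by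
  intro s hs c hnone
  by_contra h
  push_neg at h
  obtain ⟨ht, hch⟩ := h
  set t := BASE s + c with hteq
  by_cases hr : t = root
  · exact hcr s hs (hr ▸ hch)
  · obtain ⟨⟨s', c'⟩, ⟨hs', hδ⟩, _⟩ := htrie t ht hr
    obtain ⟨hb, hc⟩ := hDA s' hs' c' t hδ
    have hss : s' = s := by rw [hch] at hc; exact hc.symm
    subst hss
    have hcc : c' = c := by omega
    subst hcc
    rw [hδ] at hnone
    exact Option.some_ne_none _ hnone
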